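/- (Localization centers lie at centers of singular cubes.) Fix N ≥ 1, d ≥ 1, m > 0, α = 3/2, and a potential W : ℤ^{Nd} → ℝ; let H be the lattice Schrödinger operator (HΨ)(x) = Σ_{y : ‖y−x‖₁=1} Ψ(y) + W(x)Ψ(x) on ℤ^{Nd}. There exists L* = L*(N,d,m) such that the following holds for all L ≥ L*: if Ψ ∈ ℓ²(ℤ^{Nd}) is nonzero, satisfies HΨ = EΨ pointwise for some E ∈ ℝ, and some maximizer x* of x ↦ |Ψ(x)| (which exists since Ψ ∈ ℓ², Ψ ≠ 0) satisfies ‖x* − x‖ ≤ L^{1/α} for a point x ∈ ℤ^{Nd}, then the cube C_L(x) is (E,m)-singular. -/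

import Mathlib

open scoped BigOperators ENNReal
open MeasureTheory

namespace MPLoc

/-- Configurations of `N` particles in `ℤ^d`. -/
abbrev Conf (N d : ℕ) := Fin N × Fin d → ℤ

/-- Max-norm on `ℤ^ι`. -/
def supNorm {ι : Type*} [Fintype ι] (x : ι → ℤ) : ℕ :=
  Finset.univ.sup fun i => (x i).natAbs

/-- ℓ¹-norm on `ℤ^ι`. -/
def l1Norm {ι : Type*} [Fintype ι] (x : ι → ℤ) : ℕ :=
  ∑ i, (x i).natAbs

/-- The cube `C_L(u) = {x : ‖x - u‖_∞ ≤ L}`. -/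
noncomputable def cube {ι : Type*} [Fintype ι] [DecidableEq ι] (u : ι → ℤ) (L : ℕ) :
    Finset (ι → ℤ) :=
  Finset.Icc (fun i => u i - L) (fun i => u i + L)

/-- The finite-volume Hamiltonian with Dirichlet boundary conditions on `Λ`,
as a matrix: nearest-neighbour hopping plus multiplication by `W`. -/
noncomputable def hamMatrix {ι : Type*} [Fintype ι] [DecidableEq ι]
    (W : (ι → ℤ) → ℝ) (Λ : Finset (ι → ℤ)) : Matrix Λ Λ ℂ :=
  fun x y => (if l1Norm (x.1 - y.1) = 1 then 1 else 0) +
    (if x = y then (W x.1 : ℂ) else 0)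

/-- `z` is an eigenvalue of the matrix `A`. -/
def IsEV {n : Type*} [Fintype n] [DecidableEq n] (A : Matrix n n ℂ) (z : ℂ) : Prop :=
  ∃ v : n → ℂ, v ≠ 0 ∧ A.mulVec v = z • v

/-- Green function `G_Λ(x, y; ζ)` of the finite-volume Hamiltonian. -/
noncomputable def green {ι : Type*} [Fintype ι] [DecidableEq ι]
    (W : (ι → ℤ) → ℝ) (Λ : Finset (ι → ℤ)) (ζ : ℂ) (x y : ι → ℤ) : ℂ :=
  if hx : x ∈ Λ then
    if hy : y ∈ Λ then ((hamMatrix W Λ - ζ • (1 : Matrix Λ Λ ℂ))⁻¹) ⟨x, hx⟩ ⟨y, hy⟩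
    else 0
  else 0

/-- `γ(m, L, n) = m L (1 + L^{-1/4})^{N - n + 1}`. -/
noncomputable def gammaExp (m : ℝ) (L : ℕ) (N n : ℕ) : ℝ :=
  m * L * (1 + (L : ℝ) ^ (-(1 : ℝ) / 4)) ^ (N - n + 1)

/-- The cube `C_L(u) ⊂ ℤ^{Nd}` is `(E,m)`-non-singular. -/
noncomputable def NonSingular {ι : Type*} [Fintype ι] [DecidableEq ι] (N : ℕ)
    (W : (ι → ℤ) → ℝ) (E m : ℝ) (u : ι → ℤ) (L : ℕ) : Prop :=
  ¬ IsEV (hamMatrix W (cube u L)) (E : ℂ) ∧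
  ∀ x : ι → ℤ, ((supNorm (x - u) : ℝ) ≤ (L : ℝ) ^ ((2 : ℝ) / 3)) →
    ∀ y : ι → ℤ, supNorm (y - u) = L →
      ‖green W (cube u L) (E : ℂ) x y‖ ≤ Real.exp (-(gammaExp m L N N))

/-- Symmetrized distance `d_S(x,y) = min_τ ‖τ(x) - y‖` on `(ℤ^d)^N`. -/
noncomputable def symmDist (N d : ℕ) (x y : Conf N d) : ℤ :=
  Finset.univ.inf' ⟨1, Finset.mem_univ 1⟩ fun τ : Equiv.Perm (Fin N) =>
    supNorm (fun p : Fin N × Fin d => x (τ p.1, p.2) - y p)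

/-- Potential energy of the `N`-particle Hamiltonian:
`W(x) = g ∑_j V(x_j; ω) + U(x)`. -/
def potW {N d : ℕ} {Ω : Type*} (g : ℝ) (V : (Fin d → ℤ) → Ω → ℝ)
    (U : Conf N d → ℝ) (ω : Ω) (x : Conf N d) : ℝ :=
  g * ∑ j : Fin N, V (fun i => x (j, i)) ω + U x

/-- Action of the full lattice Hamiltonian `H = Δ + W` on a function. -/
noncomputable def hamApply {ι : Type*} [Fintype ι] [DecidableEq ι]
    (W : (ι → ℤ) → ℝ) (Ψ : (ι → ℤ) → ℂ) (x : ι → ℤ) : ℂ :=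
  (∑ y ∈ cube x 1, if l1Norm (y - x) = 1 then Ψ y else 0) + (W x : ℂ) * Ψ x

/-- The scales `L_0, L_{k+1} = ⌊L_k^{3/2}⌋`. -/
noncomputable def scale (L0 : ℕ) : ℕ → ℕ
  | 0 => L0
  | k + 1 => Nat.floor ((scale L0 k : ℝ) ^ ((3 : ℝ) / 2))

/-- Sample mean `ξ_Q` of the random field `V` over `Q`. -/
noncomputable def sampleMean {d : ℕ} {Ω : Type*} (V : (Fin d → ℤ) → Ω → ℝ)
    (Q : Finset (Fin d → ℤ)) (ω : Ω) : ℝ :=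
  (∑ x ∈ Q, V x ω) / Q.card

/-- The σ-algebra `F_{V,Q}` generated by the fluctuations `η_x = V(x) - ξ_Q`, `x ∈ Q`,
together with `V(y)`, `y ∉ Q`. -/
noncomputable def fieldSigma {d : ℕ} {Ω : Type*} [MeasurableSpace Ω]
    (V : (Fin d → ℤ) → Ω → ℝ) (Q : Finset (Fin d → ℤ)) : MeasurableSpace Ω :=
  (⨆ x ∈ Q, MeasurableSpace.comap (fun ω => V x ω - sampleMean V Q ω) inferInstance) ⊔
  (⨆ (y : Fin d → ℤ) (_ : y ∉ Q), MeasurableSpace.comap (V y) inferInstance)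

/-- Condition (CMν): the conditional distribution function of the sample mean `ξ_Q`
given `F_{V,Q}` has continuity modulus `ν_R` for every rectangle `Q` of diameter `≤ R`. -/
def CondMeasCM {d : ℕ} {Ω : Type*} [MeasurableSpace Ω] (μ : Measure Ω)
    (V : (Fin d → ℤ) → Ω → ℝ) (ν : ℕ → ℝ → ℝ) : Prop :=
  (∀ R : ℕ, ∀ t : ℝ, 0 ≤ ν R t) ∧
  (∀ R : ℕ, Filter.Tendsto (ν R) (nhdsWithin 0 (Set.Ioi 0)) (nhds 0)) ∧
  ∀ (R : ℕ) (Q : Finset (Fin d → ℤ)), Q.Nonempty →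
    (∃ a b : Fin d → ℤ, Q = Finset.Icc a b) →
    (∀ x ∈ Q, ∀ y ∈ Q, supNorm (x - y) ≤ R) →
    ∀ t s : ℝ, ∀ᵐ ω ∂μ,
      |MeasureTheory.condExp (fieldSigma V Q) μ
          (Set.indicator {ω' | sampleMean V Q ω' ≤ t} (fun _ => (1 : ℝ))) ω -
       MeasureTheory.condExp (fieldSigma V Q) μ
          (Set.indicator {ω' | sampleMean V Q ω' ≤ s} (fun _ => (1 : ℝ))) ω|
        ≤ ν R |t - s|


lemma natAbs_le_iff {a : ℤ} {L : ℕ} : a.natAbs ≤ L ↔ -(L:ℤ) ≤ a ∧ a ≤ L := by omega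

lemma mem_cube_iff {ι : Type*} [Fintype ι] [DecidableEq ι] {u z : ι → ℤ} {L : ℕ} :
    z ∈ cube u L ↔ ∀ i, (z i - u i).natAbs ≤ L := by
  simp only [cube, Finset.mem_Icc, Pi.le_def, natAbs_le_iff]
  constructor
  · rintro ⟨h1, h2⟩ i; exact ⟨by linarith [h1 i], by linarith [h2 i]⟩
  · intro h; exact ⟨fun i => by linarith [(h i).1], fun i => by linarith [(h i).2]⟩

lemma supNorm_le_iff {ι : Type*} [Fintype ι] {z : ι → ℤ} {L : ℕ} :
    supNorm z ≤ L ↔ ∀ i, (z i).natAbs ≤ L := by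
  simp [supNorm, Finset.sup_le_iff]

lemma mem_cube_iff_supNorm {ι : Type*} [Fintype ι] [DecidableEq ι] {u z : ι → ℤ} {L : ℕ} :
    z ∈ cube u L ↔ supNorm (z - u) ≤ L := by
  rw [mem_cube_iff, supNorm_le_iff]; rfl

lemma l1Norm_sub_comm {ι : Type*} [Fintype ι] (a b : ι → ℤ) :
    l1Norm (a - b) = l1Norm (b - a) := by
  unfold l1Norm
  refine Finset.sum_congr rfl fun i _ => ?_
  simp [Pi.sub_apply]; omega

lemma neighbor_mem_cube {ι : Type*} [Fintype ι] [DecidableEq ι] {z y : ι → ℤ}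
    (h : l1Norm (y - z) = 1) : y ∈ cube z 1 := by
  rw [mem_cube_iff]
  intro i
  calc ((y - z) i).natAbs ≤ l1Norm (y - z) :=
        Finset.single_le_sum (f := fun i => ((y - z) i).natAbs) (fun _ _ => Nat.zero_le _)
          (Finset.mem_univ i)
    _ = 1 := h

lemma boundary_of_escape {ι : Type*} [Fintype ι] [DecidableEq ι] {x z y : ι → ℤ} {L : ℕ}
    (hz : z ∈ cube x L) (hy : y ∈ cube z 1) (hyn : y ∉ cube x L) :
    supNorm (z - x) = L := by
  rw [mem_cube_iff] at hz hy hyn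
  push_neg at hyn
  obtain ⟨i, hi⟩ := hyn
  have h1 := hz i
  have h2 := hy i
  have : (z i - x i).natAbs = L := by omega
  refine le_antisymm (supNorm_le_iff.2 hz) ?_
  rw [← this]
  exact Finset.le_sup (f := fun i => ((z - x) i).natAbs) (Finset.mem_univ i)

lemma cube_card {ι : Type*} [Fintype ι] [DecidableEq ι] (u : ι → ℤ) (L : ℕ) :
    (cube u L).card = (2 * L + 1) ^ Fintype.card ι := by
  rw [cube, Pi.card_Icc]
  rw [Finset.prod_congr rfl (fun i _ => ?_), Finset.prod_const, Finset.card_univ]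
  rw [Int.card_Icc]
  omega

set_option maxHeartbeats 4000000 in
/-- **Localization centers lie at centers of singular cubes** (Prop. 4.2). There is
`L* = L*(N,d,m)` such that for `L ≥ L*`: if `Ψ ∈ ℓ²` is a nonzero eigenfunction of `H`
with eigenvalue `E` and a maximizer `x*` of `|Ψ|` satisfies `‖x* - x‖ ≤ L^{1/α}`
(`α = 3/2`), then the cube `C_L(x)` is `(E,m)`-singular. -/
theorem localization_center_singular (N d : ℕ) (hN : 1 ≤ N) (hd : 1 ≤ d)
    (m : ℝ) (hm : 0 < m) :
    ∃ Lstar : ℕ, ∀ L : ℕ, Lstar ≤ L →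
      ∀ (W : Conf N d → ℝ) (Ψ : Conf N d → ℂ) (E : ℝ) (xstar x : Conf N d),
        Memℓp Ψ 2 → Ψ ≠ 0 →
        (∀ z : Conf N d, hamApply W Ψ z = (E : ℂ) * Ψ z) →
        (∀ y : Conf N d, ‖Ψ y‖ ≤ ‖Ψ xstar‖) →
        (supNorm (xstar - x) : ℝ) ≤ (L : ℝ) ^ ((2 : ℝ) / 3) →
        ¬ NonSingular N W E m x L := by
  classical
  set K := Fintype.card (Fin N × Fin d) with hK
  -- Choose `Lstar` so that `(2L+1)^K * 3^K * exp(-mL) < 1` for `L ≥ Lstar`.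
  have hg : Filter.Tendsto (fun x : ℝ => (m * x) ^ K * Real.exp (-(m * x)))
      Filter.atTop (nhds 0) :=
    (Real.tendsto_pow_mul_exp_neg_atTop_nhds_zero K).comp
      (Filter.Tendsto.const_mul_atTop hm Filter.tendsto_id)
  have hb : Filter.Tendsto (fun x : ℝ => (9 / m) ^ K * ((m * x) ^ K * Real.exp (-(m * x))))
      Filter.atTop (nhds 0) := by
    simpa using hg.const_mul ((9 / m) ^ K)
  have hev : ∀ᶠ x : ℝ in Filter.atTop,
      ((2 * x + 1) ^ K * 3 ^ K) * Real.exp (-(m * x)) < 1 := by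
    filter_upwards [hb.eventually (gt_mem_nhds one_pos), Filter.eventually_ge_atTop (1 : ℝ)]
      with x h1 hx1
    have hxpos : (0 : ℝ) < x := lt_of_lt_of_le one_pos hx1
    have hkey : (2 * x + 1) ^ K * 3 ^ K ≤ (9 / m) ^ K * (m * x) ^ K := by
      have h9 : (9 / m) ^ K * (m * x) ^ K = (9 * x) ^ K := by
        rw [← mul_pow]
        congr 1
        field_simp
      rw [h9, ← mul_pow]
      apply pow_le_pow_left₀ (by positivity)
      linarith
    calc ((2 * x + 1) ^ K * 3 ^ K) * Real.exp (-(m * x))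
        ≤ ((9 / m) ^ K * (m * x) ^ K) * Real.exp (-(m * x)) :=
          mul_le_mul_of_nonneg_right hkey (Real.exp_nonneg _)
      _ = (9 / m) ^ K * ((m * x) ^ K * Real.exp (-(m * x))) := by ring
      _ < 1 := h1
  obtain ⟨x0, hx0⟩ := Filter.eventually_atTop.1 hev
  refine ⟨max 1 ⌈x0⌉₊, ?_⟩
  intro L hL W Ψ E xstar x hl2 hne heig hmax hxs hNS
  obtain ⟨hEV, hG⟩ := hNS
  have hL1 : 1 ≤ L := le_trans (le_max_left _ _) hL
  have hCL : ((2 * (L : ℝ) + 1) ^ K * 3 ^ K) * Real.exp (-(m * L)) < 1 := by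
    apply hx0
    calc x0 ≤ (⌈x0⌉₊ : ℝ) := Nat.le_ceil x0
      _ ≤ (L : ℝ) := by exact_mod_cast le_trans (le_max_right _ _) hL
  -- positivity of the maximum
  set M := ‖Ψ xstar‖ with hMdef
  have hMpos : 0 < M := by
    obtain ⟨z0, hz0⟩ := Function.ne_iff.1 hne
    have h0 : 0 < ‖Ψ z0‖ := by
      exact norm_pos_iff.2 hz0
    exact lt_of_lt_of_le h0 (hmax z0)
  -- `xstar` lies in the cube
  have hrp : ((L : ℝ)) ^ ((2 : ℝ) / 3) ≤ (L : ℝ) := by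
    have h1L : (1 : ℝ) ≤ (L : ℝ) := by exact_mod_cast hL1
    calc ((L : ℝ)) ^ ((2 : ℝ) / 3) ≤ ((L : ℝ)) ^ ((1 : ℝ)) :=
          Real.rpow_le_rpow_of_exponent_le h1L (by norm_num)
      _ = (L : ℝ) := Real.rpow_one _
  set Λ := cube x L with hLam
  have hxsL : xstar ∈ Λ := by
    rw [hLam, mem_cube_iff_supNorm]
    exact_mod_cast hxs.trans hrp
  -- the matrix `A = H_Λ - E` is invertible
  set A : Matrix Λ Λ ℂ := hamMatrix W Λ - (E : ℂ) • 1 with hAdef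
  have hdet : A.det ≠ 0 := by
    intro h
    obtain ⟨v, hv, hv0⟩ := Matrix.exists_mulVec_eq_zero_iff.2 h
    refine hEV ⟨v, hv, ?_⟩
    rw [hAdef, Matrix.sub_mulVec, Matrix.smul_mulVec, Matrix.one_mulVec,
      sub_eq_zero] at hv0
    exact hv0
  have hunit : IsUnit A.det := isUnit_iff_ne_zero.2 hdet
  -- boundary terms
  set F : Conf N d → Conf N d → ℂ :=
    fun z y => if l1Norm (y - z) = 1 then Ψ y else 0 with hFdef
  set bdry : Λ → ℂ := fun z => ∑ y ∈ cube (z : Conf N d) 1 \ Λ, F (z : Conf N d) y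
    with hbdef
  -- the key identity `A Ψ|_Λ = - bdry`
  have key : A.mulVec (fun y : Λ => Ψ y.1) = fun z => - bdry z := by
    funext z
    have heq := heig z.1
    rw [hamApply] at heq
    have hmv : A.mulVec (fun y : Λ => Ψ y.1) z
        = (∑ y : Λ, if l1Norm (z.1 - y.1) = 1 then Ψ y.1 else 0)
          + (W z.1 : ℂ) * Ψ z.1 - (E : ℂ) * Ψ z.1 := by
      simp only [hAdef, Matrix.mulVec, dotProduct, Matrix.sub_apply,
        Matrix.smul_apply, Matrix.one_apply, hamMatrix, smul_eq_mul, sub_mul, add_mul,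
        ite_mul, one_mul, zero_mul, mul_ite, mul_one, mul_zero,
        Finset.sum_sub_distrib, Finset.sum_add_distrib, Finset.sum_ite_eq,
        Finset.mem_univ, if_true]
    have hflip : (∑ y : Λ, if l1Norm (z.1 - y.1) = 1 then Ψ y.1 else 0)
        = ∑ y : Λ, F z.1 y.1 := by
      refine Finset.sum_congr rfl fun y _ => ?_
      rw [hFdef, l1Norm_sub_comm]
    have h2 : ∑ y : Λ, F z.1 y.1 = ∑ y ∈ Λ, F z.1 y := Finset.sum_coe_sort Λ (F z.1)
    have h3 : ∑ y ∈ Λ ∩ cube z.1 1, F z.1 y = ∑ y ∈ Λ, F z.1 y :=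
      Finset.sum_subset Finset.inter_subset_left fun y hy hny =>
        if_neg fun hc => hny (Finset.mem_inter.2 ⟨hy, neighbor_mem_cube hc⟩)
    have h4 : ∑ y ∈ cube z.1 1 ∩ Λ, F z.1 y + ∑ y ∈ cube z.1 1 \ Λ, F z.1 y
        = ∑ y ∈ cube z.1 1, F z.1 y := Finset.sum_inter_add_sum_sdiff _ _ _
    rw [hmv, hflip, h2, ← h3, Finset.inter_comm]
    have hb0 : bdry z = ∑ y ∈ cube z.1 1 \ Λ, F z.1 y := rfl
    rw [hb0]
    linear_combination h4 + heq
  -- representation of `Ψ` on `Λ` via the Green function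
  have hrep : (fun y : Λ => Ψ y.1) = A⁻¹.mulVec (fun z => - bdry z) := by
    rw [← key, Matrix.mulVec_mulVec, Matrix.nonsing_inv_mul A hunit, Matrix.one_mulVec]
  have hval : Ψ xstar = ∑ z : Λ, A⁻¹ ⟨xstar, hxsL⟩ z * (- bdry z) := by
    have h := congrFun hrep ⟨xstar, hxsL⟩
    simpa [Matrix.mulVec, dotProduct] using h
  -- termwise bound
  have hterm : ∀ z : Λ, ‖A⁻¹ ⟨xstar, hxsL⟩ z * (- bdry z)‖
      ≤ Real.exp (-(gammaExp m L N N)) * ((3 : ℝ) ^ K * M) := by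
    intro z
    rw [norm_mul, norm_neg]
    by_cases hbz : bdry z = 0
    · rw [hbz]
      simp only [norm_zero, mul_zero]
      positivity
    · obtain ⟨y, hy, hy0⟩ := Finset.exists_ne_zero_of_sum_ne_zero hbz
      have hymem := Finset.mem_sdiff.1 hy
      have hbd : supNorm (z.1 - x) = L := boundary_of_escape z.2 hymem.1 hymem.2
      have hGz : ‖A⁻¹ ⟨xstar, hxsL⟩ z‖ ≤ Real.exp (-(gammaExp m L N N)) := by
        have h := hG xstar hxs z.1 hbd
        rw [green, dif_pos hxsL, dif_pos z.2] at h
        exact h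
      have hBz : ‖bdry z‖ ≤ (3 : ℝ) ^ K * M := by
        have h1 : ‖bdry z‖ ≤ ∑ y ∈ cube z.1 1 \ Λ, ‖F z.1 y‖ :=
          norm_sum_le _ _
        have h2 : ∀ y ∈ cube z.1 1 \ Λ, ‖F z.1 y‖ ≤ M := by
          intro y _
          by_cases hc : l1Norm (y - z.1) = 1
          · simpa [hFdef, hc] using hmax y
          · simp [hFdef, hc, hMpos.le]
        have hc3 : ((cube z.1 1 \ Λ).card : ℝ) ≤ (3 : ℝ) ^ K := by
          have : (cube z.1 1 \ Λ).card ≤ 3 ^ K := by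
            calc (cube z.1 1 \ Λ).card ≤ (cube z.1 1).card :=
                  Finset.card_le_card Finset.sdiff_subset
              _ = (2 * 1 + 1) ^ K := cube_card _ _
              _ = 3 ^ K := by norm_num
          exact_mod_cast this
        calc ‖bdry z‖ ≤ ∑ _y ∈ cube z.1 1 \ Λ, M :=
              h1.trans (Finset.sum_le_sum h2)
          _ = ((cube z.1 1 \ Λ).card : ℝ) * M := by rw [Finset.sum_const, nsmul_eq_mul]
          _ ≤ (3 : ℝ) ^ K * M := mul_le_mul_of_nonneg_right hc3 hMpos.le
      exact mul_le_mul hGz hBz (norm_nonneg _) (Real.exp_nonneg _)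
  -- summing up
  have hsum : M ≤ (Λ.card : ℝ) * (Real.exp (-(gammaExp m L N N)) * ((3 : ℝ) ^ K * M)) := by
    calc M = ‖∑ z : Λ, A⁻¹ ⟨xstar, hxsL⟩ z * (- bdry z)‖ := by rw [hMdef, hval]
      _ ≤ ∑ z : Λ, ‖A⁻¹ ⟨xstar, hxsL⟩ z * (- bdry z)‖ := norm_sum_le _ _
      _ ≤ ∑ _z : Λ, Real.exp (-(gammaExp m L N N)) * ((3 : ℝ) ^ K * M) :=
          Finset.sum_le_sum fun z _ => hterm z
      _ = (Λ.card : ℝ) * (Real.exp (-(gammaExp m L N N)) * ((3 : ℝ) ^ K * M)) := by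
          rw [Finset.sum_const, nsmul_eq_mul, Finset.card_univ, Fintype.card_coe]
  have hgam : m * L ≤ gammaExp m L N N := by
    rw [gammaExp]
    have ht : (0 : ℝ) ≤ ((L : ℝ)) ^ (-(1 : ℝ) / 4) := Real.rpow_nonneg (Nat.cast_nonneg L) _
    have hml : (0 : ℝ) ≤ m * L := by positivity
    have hNN : N - N + 1 = 1 := by omega
    rw [hNN, pow_one]
    nlinarith
  have hexp : Real.exp (-(gammaExp m L N N)) ≤ Real.exp (-(m * L)) :=
    Real.exp_le_exp.2 (by linarith)
  have hcard : (Λ.card : ℝ) = (2 * (L : ℝ) + 1) ^ K := by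
    rw [hLam, cube_card]
    push_cast
    ring
  have hfin : M ≤ (((2 * (L : ℝ) + 1) ^ K * 3 ^ K) * Real.exp (-(m * L))) * M := by
    refine hsum.trans ?_
    rw [hcard]
    have h3M : (0 : ℝ) ≤ (3 : ℝ) ^ K * M := by positivity
    have hpow : (0 : ℝ) ≤ (2 * (L : ℝ) + 1) ^ K := by positivity
    nlinarith [mul_le_mul_of_nonneg_right hexp h3M]
  nlinarith [mul_pos (sub_pos.2 hCL) hMpos]

end MPLoc
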